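/- A monad T with an iteration operator † satisfying unfolding, naturality, uniformity, and the Bekić identity also satisfies dinaturality: for g : X → T(Y + Z) and h : Z → T(Y + X), ([η ∘ inl, h]* ∘ g)† = [η, ([η ∘ inl, g]* ∘ h)†]* ∘ g. -/

import Mathlib

open CategoryTheory Limits

variable {C : Type*} [Category C] [HasBinaryCoproducts C]

/-- Kleisli extension of a monad. -/
def kl (T : Monad C) {X Y : C} (f : X ⟶ T.obj Y) : T.obj X ⟶ T.obj Y :=
  T.map f ≫ T.μ.app Y

omit [HasBinaryCoproducts C] in
lemma eta_kl (T : Monad C) {X Y : C} (f : X ⟶ T.obj Y) : T.η.app X ≫ kl T f = f := by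
  simp [kl, ← T.η.naturality_assoc f]

omit [HasBinaryCoproducts C] in
lemma map_comp_kl (T : Monad C) {X Y Z : C} (f : X ⟶ Y) (g : Y ⟶ T.obj Z) :
    T.map f ≫ kl T g = kl T (f ≫ g) := by
  simp [kl]

omit [HasBinaryCoproducts C] in
lemma kl_eta_id (T : Monad C) (X : C) : kl T (T.η.app X) = 𝟙 _ := by
  simp [kl]

/-- A monad with an iteration operator satisfying unfolding, naturality, uniformity
and the Bekić identity also satisfies dinaturality. -/
theorem dinaturality_of_bekic (T : Monad C)
    (iter : ∀ {X Y : C}, (X ⟶ T.obj (Y ⨿ X)) → (X ⟶ T.obj Y))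
    (unfolding : ∀ {X Y : C} (f : X ⟶ T.obj (Y ⨿ X)),
      f ≫ kl T (coprod.desc (T.η.app Y) (iter f)) = iter f)
    (naturality : ∀ {X Y Z : C} (f : X ⟶ T.obj (Y ⨿ X)) (g : Y ⟶ T.obj Z),
      iter f ≫ kl T g =
        iter (f ≫ kl T (coprod.desc (g ≫ T.map coprod.inl) (coprod.inr ≫ T.η.app (Z ⨿ X)))))
    (uniformity : ∀ {X Y Z : C} (f : X ⟶ T.obj (Y ⨿ X)) (g : Z ⟶ T.obj (Y ⨿ Z)) (h : Z ⟶ X),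
      h ≫ f = g ≫ T.map (coprod.map (𝟙 Y) h) → h ≫ iter f = iter g)
    (bekic : ∀ {X Y Z : C} (g : X ⟶ T.obj ((Z ⨿ Y) ⨿ X)) (f : Y ⟶ T.obj ((Z ⨿ Y) ⨿ X)),
      iter (coprod.desc f g ≫ T.map (coprod.associator Z Y X).hom) =
        coprod.desc (coprod.inr ≫ T.η.app (Z ⨿ Y)) (iter g) ≫
          kl T (coprod.desc (T.η.app Z)
            (iter (f ≫ kl T (coprod.desc (T.η.app (Z ⨿ Y)) (iter g))))))
    {X Y Z : C} (g : X ⟶ T.obj (Y ⨿ Z)) (h : Z ⟶ T.obj (Y ⨿ X)) :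
    iter (g ≫ kl T (coprod.desc (coprod.inl ≫ T.η.app (Y ⨿ X)) h)) =
      g ≫ kl T (coprod.desc (T.η.app Y)
        (iter (h ≫ kl T (coprod.desc (coprod.inl ≫ T.η.app (Y ⨿ Z)) g)))) := by
  -- iterating a map that never returns to the loop variable is the map itself
  have hgi : ∀ {A B : C} (k : A ⟶ T.obj B),
      iter (k ≫ T.map (coprod.inl : B ⟶ B ⨿ A)) = k := by
    intro A B k
    have h1 := unfolding (k ≫ T.map (coprod.inl : B ⟶ B ⨿ A))
    rw [Category.assoc, map_comp_kl, coprod.inl_desc, kl_eta_id] at h1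
    simpa using h1.symm
  -- the two Bekić instances
  have B1 := bekic (g ≫ T.map (coprod.inl : (Y ⨿ Z) ⟶ (Y ⨿ Z) ⨿ X))
      (h ≫ T.map (coprod.desc (coprod.inl ≫ coprod.inl) (coprod.inr : X ⟶ (Y ⨿ Z) ⨿ X)))
  have B2 := bekic (h ≫ T.map (coprod.inl : (Y ⨿ X) ⟶ (Y ⨿ X) ⨿ Z))
      (g ≫ T.map (coprod.desc (coprod.inl ≫ coprod.inl) (coprod.inr : Z ⟶ (Y ⨿ X) ⨿ Z)))
  rw [hgi] at B1 B2
  have e1 : (h ≫ T.map (coprod.desc (coprod.inl ≫ coprod.inl) (coprod.inr : X ⟶ (Y ⨿ Z) ⨿ X)))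
      ≫ kl T (coprod.desc (T.η.app (Y ⨿ Z)) g)
      = h ≫ kl T (coprod.desc (coprod.inl ≫ T.η.app (Y ⨿ Z)) g) := by
    rw [Category.assoc, map_comp_kl]
    have : (coprod.desc (coprod.inl ≫ coprod.inl) (coprod.inr : X ⟶ (Y ⨿ Z) ⨿ X))
        ≫ coprod.desc (T.η.app (Y ⨿ Z)) g = coprod.desc (coprod.inl ≫ T.η.app (Y ⨿ Z)) g := by
      ext <;> simp only [coprod.inl_desc_assoc, coprod.inr_desc_assoc, coprod.inl_desc, coprod.inr_desc, Category.assoc]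
    rw [this]
  have e2 : (g ≫ T.map (coprod.desc (coprod.inl ≫ coprod.inl) (coprod.inr : Z ⟶ (Y ⨿ X) ⨿ Z)))
      ≫ kl T (coprod.desc (T.η.app (Y ⨿ X)) h)
      = g ≫ kl T (coprod.desc (coprod.inl ≫ T.η.app (Y ⨿ X)) h) := by
    rw [Category.assoc, map_comp_kl]
    have : (coprod.desc (coprod.inl ≫ coprod.inl) (coprod.inr : Z ⟶ (Y ⨿ X) ⨿ Z))
        ≫ coprod.desc (T.η.app (Y ⨿ X)) h = coprod.desc (coprod.inl ≫ T.η.app (Y ⨿ X)) h := by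
      ext <;> simp only [coprod.inl_desc_assoc, coprod.inr_desc_assoc, coprod.inl_desc, coprod.inr_desc, Category.assoc]
    rw [this]
  rw [e1] at B1
  rw [e2] at B2
  -- uniformity with the swap map
  have hu : (coprod.desc coprod.inr coprod.inl : X ⨿ Z ⟶ Z ⨿ X) ≫
      (coprod.desc
        (h ≫ T.map (coprod.desc (coprod.inl ≫ coprod.inl) (coprod.inr : X ⟶ (Y ⨿ Z) ⨿ X)))
        (g ≫ T.map coprod.inl) ≫ T.map (coprod.associator Y Z X).hom)
      = (coprod.desc
        (g ≫ T.map (coprod.desc (coprod.inl ≫ coprod.inl) (coprod.inr : Z ⟶ (Y ⨿ X) ⨿ Z)))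
        (h ≫ T.map coprod.inl) ≫ T.map (coprod.associator Y X Z).hom)
        ≫ T.map (coprod.map (𝟙 Y) (coprod.desc coprod.inr coprod.inl)) := by
    have c1 : (coprod.inl : (Y ⨿ Z) ⟶ (Y ⨿ Z) ⨿ X) ≫ (coprod.associator Y Z X).hom
        = coprod.desc (coprod.inl ≫ coprod.inl) (coprod.inr : Z ⟶ (Y ⨿ X) ⨿ Z)
          ≫ (coprod.associator Y X Z).hom
          ≫ coprod.map (𝟙 Y) (coprod.desc coprod.inr coprod.inl) := by
      ext <;> simp only [coprod.associator_hom, coprod.inl_desc_assoc, coprod.inr_desc_assoc, coprod.inl_desc, coprod.inr_desc, Category.assoc, coprod.inl_map, coprod.inr_map, Category.id_comp, coprod.inl_map_assoc, coprod.inr_map_assoc]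
    have c2 : (coprod.desc (coprod.inl ≫ coprod.inl) (coprod.inr : X ⟶ (Y ⨿ Z) ⨿ X))
          ≫ (coprod.associator Y Z X).hom
        = (coprod.inl : (Y ⨿ X) ⟶ (Y ⨿ X) ⨿ Z) ≫ (coprod.associator Y X Z).hom
          ≫ coprod.map (𝟙 Y) (coprod.desc coprod.inr coprod.inl) := by
      ext <;> simp only [coprod.associator_hom, coprod.inl_desc_assoc, coprod.inr_desc_assoc, coprod.inl_desc, coprod.inr_desc, Category.assoc, coprod.inl_map, coprod.inr_map, Category.id_comp, coprod.inl_map_assoc, coprod.inr_map_assoc]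
    apply coprod.hom_ext
    · simp only [coprod.inl_desc_assoc, coprod.inr_desc_assoc, Category.assoc,
        ← Functor.map_comp]
      rw [c1]
    · simp only [coprod.inl_desc_assoc, coprod.inr_desc_assoc, Category.assoc,
        ← Functor.map_comp]
      rw [c2]
  have hU := uniformity _ _ _ hu
  rw [B1, B2] at hU
  have stepL := congrArg (fun t => (coprod.inl : X ⟶ X ⨿ Z) ≫ t) hU
  simp only [coprod.inl_desc_assoc, coprod.inl_desc, coprod.inr_desc_assoc,
    coprod.inr_desc, Category.assoc, eta_kl] at stepL
  -- stepL should now be : iter p = g ≫ kl T (desc η (iter q)) (up to orientation)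
  exact stepL.symm
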